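/- Let Ψ be an abelian group, α an ordinal, and (γ_j)_{j≤α} a well-ordered family of elements of Ψ. For each ordinal i ≤ α let G_i be the subgroup generated by {γ_j : j ≤ i}, let G_{i⁻} be the subgroup generated by {γ_j : j < i}, and let n_i = min{ r ∈ ℕ_{>0} : r·γ_i ∈ G_{i⁻} } when this set is nonempty (n_i = ∞ otherwise). Then for every i ≤ α with n_i ≠ ∞ there is a unique representation n_i·γ_i = Σ_{j<i} m_j·γ_j where m_j = 0 for all but finitely many j, 0 ≤ m_j < n_j whenever n_j ≠ ∞, and m_j ∈ ℤ when n_j = ∞. -/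

import Mathlib

section Aux

variable {Ψ : Type*} [AddCommGroup Ψ]

/-- The subgroup generated by `{γ j : j < i}`. -/
private abbrev Gm (γ : Ordinal → Ψ) (i : Ordinal) : AddSubgroup Ψ :=
  AddSubgroup.closure {x | ∃ j < i, x = γ j}

private lemma gamma_mem (γ : Ordinal → Ψ) {j i : Ordinal} (h : j < i) : γ j ∈ Gm γ i :=
  AddSubgroup.subset_closure ⟨j, h, rfl⟩

private lemma sum_mem_Gm (γ : Ordinal → Ψ) {s : Finset Ordinal} {i : Ordinal}
    (hs : ∀ j ∈ s, j < i) (c : Ordinal → ℤ) : ∑ j ∈ s, c j • γ j ∈ Gm γ i :=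
  AddSubgroup.sum_mem _ fun j hj => AddSubgroup.zsmul_mem _ (gamma_mem γ (hs j hj)) _

private lemma memGm_rep (γ : Ordinal → Ψ) {x : Ψ} {i : Ordinal} (hx : x ∈ Gm γ i) :
    ∃ s : Finset Ordinal, (∀ j ∈ s, j < i) ∧ ∃ c : Ordinal → ℤ, x = ∑ j ∈ s, c j • γ j := by
  induction hx using AddSubgroup.closure_induction with
  | mem x hx =>
    obtain ⟨j, hj, rfl⟩ := hx
    exact ⟨{j}, by simpa using hj, fun _ => 1, by simp⟩
  | zero => exact ⟨∅, by simp, 0, by simp⟩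
  | add x y hx hy ihx ihy =>
    obtain ⟨s₁, h₁, c₁, e₁⟩ := ihx
    obtain ⟨s₂, h₂, c₂, e₂⟩ := ihy
    have key : ∀ (t : Finset Ordinal) (c : Ordinal → ℤ), t ⊆ s₁ ∪ s₂ →
        ∑ l ∈ s₁ ∪ s₂, (if l ∈ t then c l else 0) • γ l = ∑ l ∈ t, c l • γ l := by
      intro t c ht
      rw [← Finset.sum_subset ht (fun l _ hl => by rw [if_neg hl, zero_smul])]
      exact Finset.sum_congr rfl fun l hl => by rw [if_pos hl]
    refine ⟨s₁ ∪ s₂, ?_, fun l => (if l ∈ s₁ then c₁ l else 0) + (if l ∈ s₂ then c₂ l else 0), ?_⟩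
    · intro j hj
      rcases Finset.mem_union.1 hj with h | h
      exacts [h₁ j h, h₂ j h]
    · simp only [add_smul, Finset.sum_add_distrib]
      rw [key s₁ c₁ Finset.subset_union_left, key s₂ c₂ Finset.subset_union_right, e₁, e₂]
  | neg x hx ih =>
    obtain ⟨s, h, c, e⟩ := ih
    exact ⟨s, h, -c, by rw [e, ← Finset.sum_neg_distrib]; simp⟩

end Aux

section Main

variable {Ψ : Type*} [AddCommGroup Ψ] (γ : Ordinal → Ψ) (n : Ordinal → ℕ∞)
variable (hn : ∀ i : Ordinal, n i = sInf {r : ℕ∞ | ∃ r' : ℕ, r = (r' : ℕ∞) ∧ 0 < r' ∧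
      (r' : ℤ) • γ i ∈ AddSubgroup.closure {x | ∃ j < i, x = γ j}})

include hn

private lemma n_spec (i : Ordinal) (hni : n i ≠ ⊤) :
    0 < (n i).toNat ∧ ((n i).toNat : ℤ) • γ i ∈ Gm γ i ∧
      ∀ r : ℕ, 0 < r → (r : ℤ) • γ i ∈ Gm γ i → (n i).toNat ≤ r := by
  have hne : {r : ℕ∞ | ∃ r' : ℕ, r = (r' : ℕ∞) ∧ 0 < r' ∧
      (r' : ℤ) • γ i ∈ AddSubgroup.closure {x | ∃ j < i, x = γ j}}.Nonempty := by
    by_contra h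
    rw [Set.not_nonempty_iff_eq_empty] at h
    rw [hn i, h, sInf_empty] at hni
    exact hni rfl
  have hmem := (hn i) ▸ csInf_mem hne
  obtain ⟨r', hr1, hr2, hr3⟩ := hmem
  have htn : (n i).toNat = r' := by rw [hr1]; simp
  refine ⟨by omega, by rw [htn]; exact hr3, ?_⟩
  intro r hr hrG
  have hle : n i ≤ (r : ℕ∞) := (hn i) ▸ csInf_le (OrderBot.bddBelow _) ⟨r, rfl, hr, hrG⟩
  rw [hr1, Nat.cast_le] at hle
  omega

private lemma n_pos (i : Ordinal) (hni : n i ≠ ⊤) : (0 : ℕ∞) < n i := by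
  have h := (n_spec γ n hn i hni).1
  rw [← ENat.coe_toNat hni]
  exact_mod_cast h

private lemma dvd_of_smul_mem (i : Ordinal) (hni : n i ≠ ⊤) {c : ℤ}
    (hc : c • γ i ∈ Gm γ i) : ((n i).toNat : ℤ) ∣ c := by
  obtain ⟨hpos, hmem, hmin⟩ := n_spec γ n hn i hni
  set N : ℤ := ((n i).toNat : ℤ) with hNdef
  have hN0 : 0 < N := by rw [hNdef]; exact_mod_cast hpos
  have h1 : (c % N) • γ i ∈ Gm γ i := by
    have hd : c % N = c - N * (c / N) := by rw [Int.emod_def]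
    rw [hd, sub_smul, mul_comm, mul_smul]
    exact AddSubgroup.sub_mem _ hc (AddSubgroup.zsmul_mem _ hmem _)
  by_contra hdvd
  have hr0 : 0 < c % N := by
    rcases (Int.emod_nonneg c hN0.ne').lt_or_eq with h | h
    · exact h
    · exact absurd (Int.dvd_of_emod_eq_zero h.symm) hdvd
  have hrN : c % N < N := Int.emod_lt_of_pos c hN0
  have hcast : ((c % N).toNat : ℤ) = c % N := Int.toNat_of_nonneg hr0.le
  have := hmin (c % N).toNat (by omega) (by rw [hcast]; exact h1)
  omega

private lemma eq_zero_of_smul_mem (i : Ordinal) (hni : n i = ⊤) {c : ℤ}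
    (hc : c • γ i ∈ Gm γ i) : c = 0 := by
  by_contra h0
  have habs : (c.natAbs : ℤ) • γ i ∈ Gm γ i := by
    rcases Int.natAbs_eq c with h | h
    · rw [← h]; exact hc
    · rw [show ((c.natAbs : ℤ)) = -c by omega, neg_smul]
      exact AddSubgroup.neg_mem _ hc
  have hT : ((c.natAbs : ℕ∞)) ∈ {r : ℕ∞ | ∃ r' : ℕ, r = (r' : ℕ∞) ∧ 0 < r' ∧
      (r' : ℤ) • γ i ∈ AddSubgroup.closure {x | ∃ j < i, x = γ j}} :=
    ⟨c.natAbs, rfl, Int.natAbs_pos.2 h0, habs⟩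
  have hle : n i ≤ (c.natAbs : ℕ∞) := (hn i) ▸ csInf_le (OrderBot.bddBelow _) hT
  rw [hni, top_le_iff] at hle
  exact (ENat.coe_ne_top c.natAbs) hle

private lemma exists_rep : ∀ i : Ordinal, ∀ x ∈ Gm γ i,
    ∃ m : Ordinal → ℤ, (∀ j, ¬ j < i → m j = 0) ∧ {j | m j ≠ 0}.Finite ∧
      (∀ j, n j ≠ ⊤ → 0 ≤ m j ∧ ((m j).toNat : ℕ∞) < n j) ∧ x = ∑ᶠ j, m j • γ j := by
  intro i
  induction i using Ordinal.induction with
  | h i IH =>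
  intro x hx
  obtain ⟨s, hs, c, rfl⟩ := memGm_rep γ hx
  rcases s.eq_empty_or_nonempty with rfl | hsne
  · refine ⟨0, fun _ _ => rfl, by simp, fun j hj => ⟨le_refl _, ?_⟩, by simp⟩
    simpa using n_pos γ n hn j hj
  · set j := s.max' hsne with hjdef
    have hji : j < i := hs j (s.max'_mem hsne)
    have herase : ∀ l ∈ s.erase j, l < j := fun l hl =>
      lt_of_le_of_ne (s.le_max' l (Finset.mem_of_mem_erase hl)) (Finset.ne_of_mem_erase hl)
    have hy : ∑ l ∈ s.erase j, c l • γ l ∈ Gm γ j := sum_mem_Gm γ herase c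
    have hsplit : ∑ l ∈ s, c l • γ l = c j • γ j + ∑ l ∈ s.erase j, c l • γ l :=
      (Finset.add_sum_erase s _ (s.max'_mem hsne)).symm
    have key : ∀ r : ℤ, (n j ≠ ⊤ → 0 ≤ r ∧ ((r.toNat : ℕ∞) < n j)) → ∀ z ∈ Gm γ j,
        ∃ m : Ordinal → ℤ, (∀ l, ¬ l < i → m l = 0) ∧ {l | m l ≠ 0}.Finite ∧
          (∀ l, n l ≠ ⊤ → 0 ≤ m l ∧ ((m l).toNat : ℕ∞) < n l) ∧
          r • γ j + z = ∑ᶠ l, m l • γ l := by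
      intro r hr z hz
      obtain ⟨m', h1, h2, h3, h4⟩ := IH j hji z hz
      have hmj : m' j = 0 := h1 j (lt_irrefl j)
      refine ⟨fun l => if l = j then r else m' l, ?_, ?_, ?_, ?_⟩
      · intro l hl
        have hlj : l ≠ j := by rintro rfl; exact hl hji
        simp only [if_neg hlj]
        exact h1 l fun h => hl (h.trans hji)
      · refine Set.Finite.subset (h2.union (Set.finite_singleton j)) ?_
        intro l hl
        by_cases hlj : l = j
        · exact Or.inr hlj
        · simp only [Set.mem_setOf_eq, if_neg hlj] at hl
          exact Or.inl hl
      · intro l hl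
        by_cases hlj : l = j
        · subst hlj; simpa using hr hl
        · simp only [if_neg hlj]; exact h3 l hl
      · have hfun : (fun l => (if l = j then r else m' l) • γ l)
            = fun l => m' l • γ l + (if l = j then r • γ j else 0) := by
          funext l
          by_cases hlj : l = j
          · subst hlj; simp [hmj]
          · simp [hlj]
        have hfin1 : (Function.support fun l => m' l • γ l).Finite :=
          h2.subset fun l hl => by
            simp only [Function.mem_support] at hl
            intro h0; exact hl (by rw [h0, zero_smul])
        have hfin2 : (Function.support fun l => if l = j then r • γ j else 0).Finite :=
          (Set.finite_singleton j).subset fun l hl => by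
            simp only [Function.mem_support] at hl
            by_contra hlj
            simp only [Set.mem_singleton_iff] at hlj
            exact hl (if_neg hlj)
        have hsingle : (∑ᶠ l, if l = j then r • γ j else 0) = r • γ j := by
          rw [finsum_eq_single _ j fun l hl => if_neg hl]
          simp
        rw [hfun, finsum_add_distrib hfin1 hfin2, ← h4, hsingle]
        exact (add_comm _ _)
    by_cases hnj : n j = ⊤
    · obtain ⟨m, H1, H2, H3, H4⟩ := key (c j) (fun h => absurd hnj h) _ hy
      exact ⟨m, H1, H2, H3, by rw [hsplit, H4]⟩
    · obtain ⟨hpos, hmem, -⟩ := n_spec γ n hn j hnj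
      set N : ℤ := ((n j).toNat : ℤ) with hNdef
      have hN0 : 0 < N := by rw [hNdef]; exact_mod_cast hpos
      have hz : (c j / N) • (N • γ j) + ∑ l ∈ s.erase j, c l • γ l ∈ Gm γ j :=
        AddSubgroup.add_mem _ (AddSubgroup.zsmul_mem _ hmem _) hy
      have hnorm : n j ≠ ⊤ → 0 ≤ c j % N ∧ (((c j % N).toNat : ℕ∞) < n j) := by
        intro _
        have h0 : 0 ≤ c j % N := Int.emod_nonneg _ hN0.ne'
        have hlt : c j % N < N := Int.emod_lt_of_pos _ hN0
        have hlt' : c j % N < ((n j).toNat : ℤ) := by rw [← hNdef]; exact hlt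
        refine ⟨h0, ?_⟩
        rw [← ENat.coe_toNat hnj, Nat.cast_lt]
        omega
      obtain ⟨m, H1, H2, H3, H4⟩ := key (c j % N) hnorm _ hz
      refine ⟨m, H1, H2, H3, ?_⟩
      rw [hsplit, ← H4]
      have hcj : c j • γ j = (c j % N) • γ j + (c j / N) • (N • γ j) := by
        rw [smul_smul, ← add_smul, Int.emod_add_ediv_mul]
      rw [hcj, add_assoc]

end Main

/-- Lemma 2.1, existence and uniqueness of the representation
`n_i·γ_i = Σ_{j<i} m_j·γ_j`. -/
theorem stmt0 {Ψ : Type*} [AddCommGroup Ψ] (α : Ordinal) (γ : Ordinal → Ψ)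
    (n : Ordinal → ℕ∞)
    (hn : ∀ i : Ordinal, n i = sInf {r : ℕ∞ | ∃ r' : ℕ, r = (r' : ℕ∞) ∧ 0 < r' ∧
      (r' : ℤ) • γ i ∈ AddSubgroup.closure {x | ∃ j < i, x = γ j}})
    (i : Ordinal) (hi : i ≤ α) (hni : n i ≠ ⊤) :
    ∃! m : Ordinal → ℤ,
      (∀ j, ¬ j < i → m j = 0) ∧
      {j | m j ≠ 0}.Finite ∧
      (∀ j < i, n j ≠ ⊤ → 0 ≤ m j ∧ ((m j).toNat : ℕ∞) < n j) ∧
      ((n i).toNat : ℤ) • γ i = ∑ᶠ j, m j • γ j := by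
  have hGmem : ((n i).toNat : ℤ) • γ i ∈ Gm γ i := (n_spec γ n hn i hni).2.1
  obtain ⟨m, h1, h2, h3, h4⟩ := exists_rep γ n hn i _ hGmem
  refine ⟨m, ⟨h1, h2, fun j _ hj => h3 j hj, h4⟩, ?_⟩
  rintro m' ⟨g1, g2, g3, g4⟩
  by_contra hne
  set d : Ordinal → ℤ := fun l => m' l - m l with hd
  have hdfin : {l | d l ≠ 0}.Finite := by
    refine Set.Finite.subset (g2.union h2) ?_
    intro l hl
    by_contra hc
    simp only [Set.mem_union, Set.mem_setOf_eq, not_or, not_not] at hc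
    exact hl (by simp [hd, hc.1, hc.2])
  have hdne : {l | d l ≠ 0}.Nonempty := by
    rcases Set.eq_empty_or_nonempty {l | d l ≠ 0} with h | h
    · refine absurd (funext fun l => ?_) hne
      have h0 : ¬ d l ≠ 0 := fun hc => (h ▸ hc : l ∈ (∅ : Set Ordinal)).elim
      have h0' : m' l - m l = 0 := not_not.mp h0
      exact sub_eq_zero.mp h0'
    · exact h
  set F := hdfin.toFinset with hF
  have hFne : F.Nonempty := by rwa [hF, Set.Finite.toFinset_nonempty]
  set j := F.max' hFne with hj
  have hjF : j ∈ F := F.max'_mem hFne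
  have hdj : d j ≠ 0 := hdfin.mem_toFinset.1 hjF
  have hji : j < i := by
    by_contra h
    exact hdj (by simp [hd, g1 j h, h1 j h])
  have hsupfin : ∀ (f : Ordinal → ℤ), {l | f l ≠ 0}.Finite →
      (Function.support fun l => f l • γ l).Finite := by
    intro f hf
    refine hf.subset fun l hl => ?_
    simp only [Function.mem_support] at hl
    intro h0
    exact hl (by rw [h0, zero_smul])
  have hsum0 : ∑ᶠ l, d l • γ l = 0 := by
    have hfun : (fun l => d l • γ l) = fun l => m' l • γ l - m l • γ l :=
      funext fun l => sub_smul _ _ _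
    rw [hfun, finsum_sub_distrib (hsupfin m' g2) (hsupfin m h2), ← g4, ← h4, sub_self]
  have hsumF : ∑ᶠ l, d l • γ l = ∑ l ∈ F, d l • γ l := by
    refine finsum_eq_sum_of_support_subset _ fun l hl => ?_
    simp only [Function.mem_support] at hl
    refine (hdfin.mem_toFinset).2 fun h0 => hl ?_
    rw [h0, zero_smul]
  have hdjmem : d j • γ j ∈ Gm γ j := by
    have hsplit : d j • γ j + ∑ l ∈ F.erase j, d l • γ l = ∑ l ∈ F, d l • γ l :=
      Finset.add_sum_erase F (fun l => d l • γ l) hjF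
    have hz0 : d j • γ j + ∑ l ∈ F.erase j, d l • γ l = 0 := by
      rw [hsplit, ← hsumF]; exact hsum0
    rw [eq_neg_of_add_eq_zero_left hz0]
    refine AddSubgroup.neg_mem _ (sum_mem_Gm γ (fun l hl => ?_) d)
    exact lt_of_le_of_ne (F.le_max' l (Finset.mem_of_mem_erase hl)) (Finset.ne_of_mem_erase hl)
  by_cases hnj : n j = ⊤
  · exact hdj (eq_zero_of_smul_mem γ n hn j hnj hdjmem)
  · have hdvd := dvd_of_smul_mem γ n hn j hnj hdjmem
    obtain ⟨hm0, hmlt⟩ := h3 j hnj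
    obtain ⟨hm'0, hm'lt⟩ := g3 j hji hnj
    rw [← ENat.coe_toNat hnj, Nat.cast_lt] at hmlt hm'lt
    have hdjeq : d j = m' j - m j := rfl
    have habs : |d j| < ((n j).toNat : ℤ) := abs_lt.mpr ⟨by omega, by omega⟩
    have hge : ((n j).toNat : ℤ) ≤ |d j| :=
      Int.le_of_dvd (abs_pos.mpr hdj) ((dvd_abs _ _).mpr hdvd)
    exact absurd hge (not_le.mpr habs)
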